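/- If a coin system C = (1, c_2, ..., c_n) is not orderly, then the smallest counterexample v satisfies c_3 < v < c_{n-1} + c_n. -/

import Mathlib

/-- The largest coin value in `C` that is at most `v` (or 0 if none). -/
def coinMax (C : List ℕ) (v : ℕ) : ℕ := (C.filter (· ≤ v)).foldr max 0

/-- Fuelled greedy coin count. -/
def grdAux (C : List ℕ) : ℕ → ℕ → ℕ
  | 0, _ => 0
  | fuel + 1, v =>
    let c := coinMax C v
    if v = 0 ∨ c = 0 then 0 else 1 + grdAux C fuel (v - c)

/-- Number of coins used by the greedy algorithm to represent `v` with coin system `C`. -/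
def grd (C : List ℕ) (v : ℕ) : ℕ := grdAux C v v

/-- The set of sizes of representations of `v` as nonnegative integer combinations of
the coin values in `C`. -/
def reprCosts (C : List ℕ) (v : ℕ) : Set ℕ :=
  {k | ∃ x : List ℕ, x.length = C.length ∧ (List.zipWith (· * ·) x C).sum = v ∧ x.sum = k}

/-- Minimum number of coins needed to represent `v` with coin system `C`. -/
noncomputable def opt (C : List ℕ) (v : ℕ) : ℕ := sInf (reprCosts C v)

/-- A coin system is orderly if greedy is optimal for every positive value. -/
def Orderly (C : List ℕ) : Prop := ∀ v : ℕ, 0 < v → grd C v = opt C v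

/- ### Auxiliary lemmas ### -/

section Aux

lemma foldr_max_le {l : List ℕ} {m : ℕ} (h : ∀ a ∈ l, a ≤ m) : l.foldr max 0 ≤ m := by
  induction l with
  | nil => simp
  | cons a t ih => simp only [List.foldr_cons, max_le_iff]
                   exact ⟨h a (by simp), ih fun b hb => h b (by simp [hb])⟩

lemma le_foldr_max {l : List ℕ} {a : ℕ} (h : a ∈ l) : a ≤ l.foldr max 0 := by
  induction l with
  | nil => simp at h
  | cons b t ih =>
    rcases List.mem_cons.mp h with h | h
    · simp [h, le_max_iff]
    · simp only [List.foldr_cons, le_max_iff]; exact Or.inr (ih h)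

lemma foldr_max_mem {l : List ℕ} (h : l.foldr max 0 ≠ 0) : l.foldr max 0 ∈ l := by
  induction l with
  | nil => simp at h
  | cons b t ih =>
    simp only [List.foldr_cons] at h ⊢
    rcases max_cases b (t.foldr max 0) with ⟨h1, _⟩ | ⟨h1, _⟩
    · simp [h1]
    · rw [h1] at h ⊢; exact List.mem_cons.mpr (Or.inr (ih h))

lemma coinMax_le (C : List ℕ) (v : ℕ) : coinMax C v ≤ v := by
  apply foldr_max_le
  intro a ha
  simpa using (List.mem_filter.mp ha).2

lemma coinMax_mem {C : List ℕ} {v : ℕ} (h : coinMax C v ≠ 0) : coinMax C v ∈ C :=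
  (List.mem_filter.mp (foldr_max_mem h)).1

lemma le_coinMax {C : List ℕ} {v d : ℕ} (hd : d ∈ C) (hdv : d ≤ v) : d ≤ coinMax C v :=
  le_foldr_max (List.mem_filter.mpr ⟨hd, by simpa⟩)

lemma coinMax_eq {C : List ℕ} {v c : ℕ} (hc : c ∈ C) (hc1 : 1 ≤ c) (hcv : c ≤ v)
    (hmax : ∀ d ∈ C, d ≤ v → d ≤ c) : coinMax C v = c := by
  have h1 : c ≤ coinMax C v := le_coinMax hc hcv
  have hne : coinMax C v ≠ 0 := by omega
  exact le_antisymm (hmax _ (coinMax_mem hne) (coinMax_le C v)) h1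

lemma grdAux_succ (C : List ℕ) (f v : ℕ) : grdAux C (f+1) v =
    if v = 0 ∨ coinMax C v = 0 then 0 else 1 + grdAux C f (v - coinMax C v) := rfl

lemma grdAux_congr (C : List ℕ) : ∀ f₁ f₂ v, v ≤ f₁ → v ≤ f₂ →
    grdAux C f₁ v = grdAux C f₂ v := by
  intro f₁
  induction f₁ with
  | zero => intro f₂ v h1 _; interval_cases v; cases f₂ <;> simp [grdAux]
  | succ f ih =>
    intro f₂ v h1 h2
    cases f₂ with
    | zero => interval_cases v; simp [grdAux]
    | succ g =>
      rw [grdAux_succ, grdAux_succ]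
      by_cases h : v = 0 ∨ coinMax C v = 0
      · simp [h]
      · rw [if_neg h, if_neg h]
        push_neg at h
        have hc : 1 ≤ coinMax C v := by omega
        exact congrArg (1 + ·) (ih g (v - coinMax C v) (by omega) (by omega))

lemma grd_zero (C : List ℕ) : grd C 0 = 0 := rfl

lemma grd_step {C : List ℕ} {v : ℕ} (hv : 0 < v) (hc : coinMax C v ≠ 0) :
    grd C v = 1 + grd C (v - coinMax C v) := by
  obtain ⟨u, rfl⟩ : ∃ u, v = u + 1 := ⟨v - 1, by omega⟩
  show grdAux C (u+1) (u+1) = _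
  rw [grdAux_succ, if_neg (by push_neg; exact ⟨by omega, hc⟩)]
  congr 1
  have h1 : 1 ≤ coinMax C (u+1) := by omega
  have h2 : coinMax C (u+1) ≤ u + 1 := coinMax_le _ _
  exact grdAux_congr C u (u + 1 - coinMax C (u+1)) _ (by omega) le_rfl

lemma zip_add_sum : ∀ (C x y : List ℕ), x.length = C.length → y.length = C.length →
    (List.zipWith (· * ·) (List.zipWith (· + ·) x y) C).sum
      = (List.zipWith (· * ·) x C).sum + (List.zipWith (· * ·) y C).sum := by
  intro C
  induction C with
  | nil => intro x y hx hy; simp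
  | cons c t ih =>
    intro x y hx hy
    cases x with
    | nil => simp at hx
    | cons a x' =>
      cases y with
      | nil => simp at hy
      | cons b y' =>
        simp only [List.zipWith_cons_cons, List.sum_cons]
        rw [ih x' y' (by simpa using hx) (by simpa using hy)]
        ring

lemma zipWith_add_sum_eq {x y : List ℕ} (h : x.length = y.length) :
    (List.zipWith (· + ·) x y).sum = x.sum + y.sum := by
  induction x generalizing y with
  | nil => cases y with
           | nil => simp
           | cons b y' => simp at h
  | cons a x' ih =>
    cases y with
    | nil => simp at h
    | cons b y' => simp only [List.zipWith_cons_cons, List.sum_cons]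
                   rw [ih (by simpa using h)]; ring

lemma reprCosts_add {C : List ℕ} {v u a b : ℕ} (ha : a ∈ reprCosts C v)
    (hb : b ∈ reprCosts C u) : a + b ∈ reprCosts C (v + u) := by
  obtain ⟨x, hx1, hx2, hx3⟩ := ha
  obtain ⟨y, hy1, hy2, hy3⟩ := hb
  refine ⟨List.zipWith (· + ·) x y, ?_, ?_, ?_⟩
  · rw [List.length_zipWith]; omega
  · rw [zip_add_sum C x y hx1 hy1, hx2, hy2]
  · rw [zipWith_add_sum_eq (by omega), hx3, hy3]

lemma reprCosts_zero (C : List ℕ) : 0 ∈ reprCosts C 0 := by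
  refine ⟨List.replicate C.length 0, by simp, ?_, by simp⟩
  induction C with
  | nil => simp
  | cons c t ih => rw [List.length_cons, List.replicate_succ]; simpa using ih

lemma reprCosts_single {C : List ℕ} {c : ℕ} (hc : c ∈ C) : 1 ∈ reprCosts C c := by
  induction C with
  | nil => simp at hc
  | cons d t ih =>
    rcases List.mem_cons.mp hc with rfl | hc
    · obtain ⟨x, h1, h2, h3⟩ := reprCosts_zero t
      exact ⟨1 :: x, by simpa using h1, by simp [h2], by simp [h3]⟩
    · obtain ⟨x, h1, h2, h3⟩ := ih hc
      exact ⟨0 :: x, by simpa using h1, by simp [h2], by simp [h3]⟩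

lemma coins_rep {C : List ℕ} : ∀ {K : List ℕ}, (∀ c ∈ K, c ∈ C) →
    K.length ∈ reprCosts C K.sum := by
  intro K
  induction K with
  | nil => intro _; simpa using reprCosts_zero C
  | cons c K' ih =>
    intro h
    have h1 : 1 ∈ reprCosts C c := reprCosts_single (h c (by simp))
    have h2 := ih (fun d hd => h d (by simp [hd]))
    simpa [add_comm] using reprCosts_add h1 h2

lemma opt_le {C : List ℕ} {v k : ℕ} (h : k ∈ reprCosts C v) : opt C v ≤ k := Nat.sInf_le h

lemma reprCosts_nonempty {C : List ℕ} (h1 : (1:ℕ) ∈ C) (v : ℕ) : (reprCosts C v).Nonempty := by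
  refine ⟨(List.replicate v 1).length, ?_⟩
  have := coins_rep (C := C) (K := List.replicate v 1)
    (by intro c hc; rw [List.eq_of_mem_replicate hc]; exact h1)
  simpa using this

lemma opt_mem {C : List ℕ} (h1 : (1:ℕ) ∈ C) (v : ℕ) : opt C v ∈ reprCosts C v :=
  Nat.sInf_mem (reprCosts_nonempty h1 v)

lemma opt_zero (C : List ℕ) : opt C 0 = 0 :=
  Nat.le_antisymm (opt_le (reprCosts_zero C)) (Nat.zero_le _)

lemma val_zero_of_sum_zero : ∀ {x C : List ℕ}, x.sum = 0 →
    (List.zipWith (· * ·) x C).sum = 0 := by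
  intro x
  induction x with
  | nil => intro C _; simp
  | cons a x' ih =>
    intro C h
    cases C with
    | nil => simp
    | cons c t =>
      simp only [List.sum_cons] at h
      simp only [List.zipWith_cons_cons, List.sum_cons]
      rw [ih (by omega)]
      have : a = 0 := by omega
      simp [this]

lemma opt_pos {C : List ℕ} (h1 : (1:ℕ) ∈ C) {v : ℕ} (hv : 0 < v) : 1 ≤ opt C v := by
  by_contra h
  push_neg at h
  interval_cases h' : opt C v
  · obtain ⟨x, _, h2, h3⟩ := opt_mem h1 v
    rw [h'] at h3
    rw [val_zero_of_sum_zero h3] at h2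
    omega

lemma toCoins : ∀ (C x : List ℕ), x.length = C.length →
    ∃ K : List ℕ, (∀ c ∈ K, c ∈ C) ∧ K.sum = (List.zipWith (· * ·) x C).sum
      ∧ K.length = x.sum := by
  intro C
  induction C with
  | nil => intro x hx
           have : x = [] := List.length_eq_zero_iff.mp (by simpa using hx)
           subst this
           exact ⟨[], by simp, by simp, by simp⟩
  | cons c t ih =>
    intro x hx
    cases x with
    | nil => simp at hx
    | cons m x' =>
      obtain ⟨K', h1, h2, h3⟩ := ih x' (by simpa using hx)
      refine ⟨List.replicate m c ++ K', ?_, ?_, ?_⟩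
      · intro d hd
        rcases List.mem_append.mp hd with hd | hd
        · rw [List.eq_of_mem_replicate hd]; simp
        · exact List.mem_cons.mpr (Or.inr (h1 d hd))
      · simp [h2, mul_comm]
      · simp [h3]

lemma prefix_split : ∀ (K : List ℕ) (t a : ℕ), 1 ≤ t → t ≤ K.sum → (∀ c ∈ K, c ≤ a) →
    ∃ K₁ K₂ : List ℕ, K = K₁ ++ K₂ ∧ t ≤ K₁.sum ∧ K₁.sum < t + a := by
  intro K
  induction K with
  | nil => intro t a ht hts _; simp at hts; omega
  | cons c K' ih =>
    intro t a ht hts hle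
    by_cases hct : t ≤ c
    · refine ⟨[c], K', by simp, by simpa using hct, ?_⟩
      have := hle c (by simp)
      simp; omega
    · push_neg at hct
      have hsum : t - c ≤ K'.sum := by simp at hts; omega
      obtain ⟨K₁, K₂, heq, h1, h2⟩ := ih (t - c) a (by omega) hsum
        (fun d hd => hle d (by simp [hd]))
      refine ⟨c :: K₁, K₂, by simp [heq], ?_, ?_⟩ <;> simp <;> omega

lemma sublemma_zero : ∀ (t xt : List ℕ) (m : ℕ), xt.length = t.length →
    (∀ e ∈ t, m < e) → (List.zipWith (· * ·) xt t).sum ≤ m → xt.sum = 0 := by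
  intro t
  induction t with
  | nil => intro xt m hl _ _
           have : xt = [] := List.length_eq_zero_iff.mp (by simpa using hl)
           simp [this]
  | cons e t' ih =>
    intro xt m hl hlt hsum
    cases xt with
    | nil => simp
    | cons y yt =>
      simp only [List.zipWith_cons_cons, List.sum_cons] at hsum ⊢
      have he : m < e := hlt e (by simp)
      have hy : y = 0 := by nlinarith [Nat.zero_le (List.zipWith (· * ·) yt t').sum]
      subst hy
      simp only [Nat.zero_mul, Nat.zero_add] at hsum ⊢
      exact ih yt m (by simpa using hl) (fun d hd => hlt d (by simp [hd])) hsum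

end Aux

/- ### Structured coin system lemmas ### -/

section System

variable {C : List ℕ}

lemma get_lt_get (hpw : List.Pairwise (· < ·) C) {i j : ℕ} (hij : i < j)
    (hj : j < C.length) :
    C.get ⟨i, lt_trans hij hj⟩ < C.get ⟨j, hj⟩ :=
  List.pairwise_iff_get.mp hpw ⟨i, _⟩ ⟨j, _⟩ hij

lemma get_le_get (hpw : List.Pairwise (· < ·) C) {i j : ℕ} (hij : i ≤ j)
    (hj : j < C.length) :
    C.get ⟨i, lt_of_le_of_lt hij hj⟩ ≤ C.get ⟨j, hj⟩ := by
  rcases Nat.lt_or_ge i j with h | h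
  · exact le_of_lt (get_lt_get hpw h hj)
  · have : i = j := by omega
    subst this; rfl

lemma mem_one_le (hpw : List.Pairwise (· < ·) C) (h0l : 0 < C.length)
    (h0 : C.get ⟨0, h0l⟩ = 1) : ∀ c ∈ C, 1 ≤ c := by
  intro c hc
  obtain ⟨⟨j, hj⟩, rfl⟩ := List.mem_iff_get.mp hc
  rcases Nat.eq_zero_or_pos j with rfl | hjpos
  · omega
  · have := get_lt_get hpw hjpos hj
    omega

end System
section PartA

variable {C : List ℕ}

lemma getD_eq_get' (C : List ℕ) {i : ℕ} (h : i < C.length) :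
    C.getD i 0 = C.get ⟨i, h⟩ := List.getD_eq_get C 0 ⟨i, h⟩

lemma getD_mem {i : ℕ} (h : i < C.length) : C.getD i 0 ∈ C := by
  rw [getD_eq_get' C h]; exact List.get_mem C _

lemma getD_lt_getD (hpw : List.Pairwise (· < ·) C) {i j : ℕ} (hij : i < j)
    (hj : j < C.length) : C.getD i 0 < C.getD j 0 := by
  rw [getD_eq_get' C (lt_trans hij hj), getD_eq_get' C hj]
  exact get_lt_get hpw hij hj

lemma getD_le_getD (hpw : List.Pairwise (· < ·) C) {i j : ℕ} (hij : i ≤ j)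
    (hj : j < C.length) : C.getD i 0 ≤ C.getD j 0 := by
  rcases Nat.lt_or_ge i j with h | h
  · exact le_of_lt (getD_lt_getD hpw h hj)
  · have : i = j := by omega
    subst this; rfl

lemma mem_one_le' (hpw : List.Pairwise (· < ·) C) (h0l : 0 < C.length)
    (h0 : C.getD 0 0 = 1) : ∀ c ∈ C, 1 ≤ c := by
  intro c hc
  obtain ⟨⟨j, hj⟩, rfl⟩ := List.mem_iff_get.mp hc
  have : C.getD j 0 = C.get ⟨j, hj⟩ := getD_eq_get' C hj
  rcases Nat.eq_zero_or_pos j with rfl | hjpos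
  · omega
  · have h1 := getD_lt_getD hpw hjpos hj
    omega

lemma mem_le_getD (hpw : List.Pairwise (· < ·) C) {c : ℕ} (hc : c ∈ C) {j : ℕ}
    (hj : j < C.length) (hclt : ∀ i, i < C.length → j < i → C.getD i 0 ≠ c) :
    c ≤ C.getD j 0 := by
  obtain ⟨⟨i, hi⟩, rfl⟩ := List.mem_iff_get.mp hc
  have he : C.getD i 0 = C.get ⟨i, hi⟩ := getD_eq_get' C hi
  rcases le_or_gt i j with h | h
  · rw [← he]; exact getD_le_getD hpw h hj
  · exact absurd he (hclt i hi h)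

lemma one_mem' (h0l : 0 < C.length) (h0 : C.getD 0 0 = 1) : (1:ℕ) ∈ C :=
  h0 ▸ getD_mem h0l

lemma cm_one (hpw : List.Pairwise (· < ·) C) (hlen : 3 ≤ C.length)
    (h0 : C.getD 0 0 = 1) {v : ℕ} (hv : 0 < v)
    (hv2 : v < C.getD 1 0) : coinMax C v = 1 := by
  apply coinMax_eq (one_mem' (by omega) h0) le_rfl hv
  intro d hd hdv
  obtain ⟨⟨j, hj⟩, rfl⟩ := List.mem_iff_get.mp hd
  have he : C.getD j 0 = C.get ⟨j, hj⟩ := getD_eq_get' C hj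
  rcases Nat.eq_zero_or_pos j with rfl | hjpos
  · omega
  · have h1 : C.getD 1 0 ≤ C.getD j 0 := getD_le_getD hpw hjpos hj
    omega

lemma cm_two (hpw : List.Pairwise (· < ·) C) (hlen : 3 ≤ C.length)
    (h0 : C.getD 0 0 = 1) {v : ℕ} (hv : C.getD 1 0 ≤ v)
    (hv3 : v < C.getD 2 0) : coinMax C v = C.getD 1 0 := by
  have h1 : (1:ℕ) ≤ C.getD 1 0 :=
    mem_one_le' hpw (by omega) h0 _ (getD_mem (by omega))
  apply coinMax_eq (getD_mem (by omega)) h1 hv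
  intro d hd hdv
  obtain ⟨⟨j, hj⟩, rfl⟩ := List.mem_iff_get.mp hd
  have he : C.getD j 0 = C.get ⟨j, hj⟩ := getD_eq_get' C hj
  rcases Nat.lt_or_ge j 2 with hj2 | hj2
  · rw [← he]; exact getD_le_getD hpw (show j ≤ 1 by omega) (by omega)
  · have h2 : C.getD 2 0 ≤ C.getD j 0 := getD_le_getD hpw hj2 hj
    omega

lemma cm_self (hpw : List.Pairwise (· < ·) C) (h0l : 0 < C.length)
    (h0 : C.getD 0 0 = 1) {c : ℕ} (hc : c ∈ C) : coinMax C c = c :=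
  coinMax_eq hc (mem_one_le' hpw h0l h0 c hc) le_rfl (fun _ _ h => h)

lemma cm_top (hpw : List.Pairwise (· < ·) C) (h0l : 0 < C.length)
    (h0 : C.getD 0 0 = 1) {v : ℕ} (hv : C.getD (C.length - 1) 0 ≤ v) :
    coinMax C v = C.getD (C.length - 1) 0 := by
  have hmem : C.getD (C.length - 1) 0 ∈ C := getD_mem (by omega)
  apply coinMax_eq hmem (mem_one_le' hpw h0l h0 _ hmem) hv
  intro d hd _
  obtain ⟨⟨j, hj⟩, rfl⟩ := List.mem_iff_get.mp hd
  have he : C.getD j 0 = C.get ⟨j, hj⟩ := getD_eq_get' C hj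
  rw [← he]
  exact getD_le_getD hpw (by omega) (by omega)

lemma opt_le_grd (hpw : List.Pairwise (· < ·) C) (h0l : 0 < C.length)
    (h0 : C.getD 0 0 = 1) : ∀ v, opt C v ≤ grd C v := by
  have hone : (1:ℕ) ∈ C := one_mem' h0l h0
  intro v
  induction v using Nat.strong_induction_on with
  | _ v ih =>
    rcases Nat.eq_zero_or_pos v with rfl | hv
    · rw [grd_zero, opt_zero]
    · have hc1 : 1 ≤ coinMax C v := le_coinMax hone hv
      have hcv : coinMax C v ≤ v := coinMax_le C v
      have hcmem : coinMax C v ∈ C := coinMax_mem (by omega)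
      rw [grd_step hv (by omega)]
      have hadd := reprCosts_add (reprCosts_single hcmem) (opt_mem hone (v - coinMax C v))
      rw [show coinMax C v + (v - coinMax C v) = v by omega] at hadd
      have h1 : opt C v ≤ 1 + opt C (v - coinMax C v) := opt_le hadd
      have h2 := ih (v - coinMax C v) (by omega)
      omega

lemma grd_small (hpw : List.Pairwise (· < ·) C) (hlen : 3 ≤ C.length)
    (h0 : C.getD 0 0 = 1) :
    ∀ v, v < C.getD 1 0 → grd C v = v := by
  intro v
  induction v using Nat.strong_induction_on with
  | _ v ih =>
    intro hv
    rcases Nat.eq_zero_or_pos v with rfl | hvpos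
    · exact grd_zero C
    · rw [grd_step hvpos (by rw [cm_one hpw hlen h0 hvpos hv]; omega),
        cm_one hpw hlen h0 hvpos hv, ih (v-1) (by omega) (by omega)]
      omega

lemma grd_mid (hpw : List.Pairwise (· < ·) C) (hlen : 3 ≤ C.length)
    (h0 : C.getD 0 0 = 1) :
    ∀ v, v < C.getD 2 0 → grd C v = v % C.getD 1 0 + v / C.getD 1 0 := by
  have h2pos : 1 < C.getD 1 0 := by
    have := getD_lt_getD hpw (show 0 < 1 by omega) (show 1 < C.length by omega)
    omega
  intro v
  induction v using Nat.strong_induction_on with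
  | _ v ih =>
    intro hv
    rcases Nat.lt_or_ge v (C.getD 1 0) with hvs | hvs
    · rw [grd_small hpw hlen h0 v hvs]
      have h1 := Nat.mod_eq_of_lt hvs
      have h2 := Nat.div_eq_of_lt hvs
      omega
    · have hvpos : 0 < v := by omega
      rw [grd_step hvpos (by rw [cm_two hpw hlen h0 hvs hv]; omega),
        cm_two hpw hlen h0 hvs hv, ih (v - C.getD 1 0) (by omega) (by omega)]
      rw [Nat.mod_eq_sub_mod hvs, Nat.div_eq_sub_div (by omega) hvs]
      omega

lemma rep_bound (hpw : List.Pairwise (· < ·) C) (hlen : 3 ≤ C.length)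
    (h0 : C.getD 0 0 = 1) {v k : ℕ} (hv : v < C.getD 2 0)
    (hk : k ∈ reprCosts C v) :
    v % C.getD 1 0 + v / C.getD 1 0 ≤ k := by
  obtain ⟨x, hx1, hx2, hx3⟩ := hk
  have h2pos : 1 < C.getD 1 0 := by
    have := getD_lt_getD hpw (show 0 < 1 by omega) (show 1 < C.length by omega)
    omega
  obtain ⟨d0, d1, tr, hCeq⟩ : ∃ d0 d1 tr, C = d0 :: d1 :: tr := by
    match C, hlen with
    | (a :: b :: t), _ => exact ⟨a, b, t, rfl⟩
  obtain ⟨x0, x1, xr, hxeq⟩ : ∃ x0 x1 xr, x = x0 :: x1 :: xr := by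
    rw [hCeq] at hx1
    match x, hx1 with
    | (a :: b :: t), _ => exact ⟨a, b, t, rfl⟩
  have hd0 : d0 = 1 := by rw [hCeq] at h0; simpa using h0
  have hd1 : d1 = C.getD 1 0 := by rw [hCeq]; rfl
  have htr : ∀ e ∈ tr, v < e := by
    intro e he
    obtain ⟨⟨j, hj⟩, rfl⟩ := List.mem_iff_get.mp he
    have hjC : j + 2 < C.length := by rw [hCeq]; simpa using hj
    have hge : C.getD 2 0 ≤ C.getD (j+2) 0 := getD_le_getD hpw (by omega) hjC
    have hEq : C.getD (j + 2) 0 = tr.get ⟨j, hj⟩ := by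
      rw [getD_eq_get' C hjC]
      subst hCeq; rfl
    omega
  subst hCeq hxeq
  simp only [List.zipWith_cons_cons, List.sum_cons] at hx2
  simp only [List.sum_cons] at hx3
  have hxr : xr.sum = 0 := by
    apply sublemma_zero tr xr v (by simpa using hx1) htr
    nlinarith [Nat.zero_le (x0 * d0 + x1 * d1)]
  have hval : (List.zipWith (· * ·) xr tr).sum = 0 := val_zero_of_sum_zero hxr
  rw [hval, hd0] at hx2
  rw [← hd1] at h2pos ⊢
  simp only [mul_one, add_zero] at hx2
  have hdm : d1 * (v / d1) + v % d1 = v := Nat.div_add_mod v d1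
  have hmul_le : x1 * d1 ≤ v := by rw [← hx2]; exact Nat.le_add_left _ _
  have hx1q : x1 ≤ v / d1 := (Nat.le_div_iff_mul_le (by omega)).mpr hmul_le
  have hd : v / d1 = x1 + (v / d1 - x1) := (Nat.add_sub_cancel' hx1q).symm
  rw [hd, Nat.mul_add] at hdm
  have hdd : v / d1 - x1 ≤ d1 * (v / d1 - x1) := Nat.le_mul_of_pos_left _ (by omega)
  have hcomm : x1 * d1 = d1 * x1 := Nat.mul_comm x1 d1
  rw [hd]
  linarith [hxr, hx3]

lemma partA (hpw : List.Pairwise (· < ·) C) (hlen : 3 ≤ C.length)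
    (h0 : C.getD 0 0 = 1) :
    ∀ v, 0 < v → v ≤ C.getD 2 0 → grd C v = opt C v := by
  have hone : (1:ℕ) ∈ C := one_mem' (by omega) h0
  intro v hv hvle
  rcases Nat.lt_or_ge v (C.getD 2 0) with hlt | hge
  · rw [grd_mid hpw hlen h0 v hlt]
    have hub : opt C v ≤ v % C.getD 1 0 + v / C.getD 1 0 := by
      rw [← grd_mid hpw hlen h0 v hlt]
      exact opt_le_grd hpw (by omega) h0 v
    have hlb := rep_bound hpw hlen h0 hlt (opt_mem hone v)
    omega
  · have hveq : v = C.getD 2 0 := by omega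
    have hc3 : v ∈ C := by rw [hveq]; exact getD_mem (by omega)
    rw [grd_step hv (by rw [cm_self hpw (by omega) h0 hc3]; omega),
      cm_self hpw (by omega) h0 hc3, Nat.sub_self, grd_zero]
    have h1 : opt C v ≤ 1 := opt_le (reprCosts_single hc3)
    have h2 := opt_pos hone hv
    omega

end PartA
section PartB

variable {C : List ℕ}

lemma partB (hpw : List.Pairwise (· < ·) C) (hlen : 3 ≤ C.length)
    (h0 : C.getD 0 0 = 1) {w : ℕ} (hwpos : 0 < w)
    (hmin : ∀ v, 0 < v → v < w → grd C v = opt C v)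
    (hab : C.getD (C.length - 2) 0 + C.getD (C.length - 1) 0 ≤ w) :
    grd C w = opt C w := by
  have hone : (1:ℕ) ∈ C := one_mem' (by omega) h0
  set a := C.getD (C.length - 2) 0 with hadef
  set b := C.getD (C.length - 1) 0 with hbdef
  have hblt : a < b := getD_lt_getD hpw (by omega) (by omega)
  have hapos : 1 ≤ a := mem_one_le' hpw (by omega) h0 _ (getD_mem (by omega))
  have hb1 : 1 ≤ b := by omega
  have hbmem : b ∈ C := by rw [hbdef]; exact getD_mem (by omega)
  have hbw : b ≤ w := by omega
  have hwbpos : 0 < w - b := by omega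
  have hcm : coinMax C w = b := by
    rw [hbdef]; exact cm_top hpw (by omega) h0 (by omega)
  have hgs : grd C w = 1 + grd C (w - b) := by
    rw [grd_step hwpos (by omega), hcm]
  have hgmin : grd C (w - b) = opt C (w - b) := hmin _ hwbpos (by omega)
  have hub : opt C w ≤ 1 + opt C (w - b) := by
    have hadd := reprCosts_add (reprCosts_single hbmem) (opt_mem hone (w - b))
    rw [show b + (w - b) = w by omega] at hadd
    exact opt_le hadd
  have hlb : 1 + opt C (w - b) ≤ opt C w := by
    obtain ⟨x, hx1, hx2, hx3⟩ := opt_mem hone w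
    obtain ⟨K, hK1, hK2, hK3⟩ := toCoins C x hx1
    rw [hx2] at hK2
    rw [hx3] at hK3
    by_cases hbK : b ∈ K
    · have hperm : K.Perm (b :: K.erase b) := List.perm_cons_erase hbK
      have hsum : K.sum = b + (K.erase b).sum := by rw [hperm.sum_eq]; simp
      have hlen' : K.length = (K.erase b).length + 1 := by rw [hperm.length_eq]; simp
      have hrep := coins_rep (K := K.erase b) (fun c hc => hK1 c (List.mem_of_mem_erase hc))
      rw [show (K.erase b).sum = w - b by omega] at hrep
      have := opt_le hrep
      omega
    · have hKle : ∀ c ∈ K, c ≤ a := by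
        intro c hc
        have hcC := hK1 c hc
        rw [hadef]
        apply mem_le_getD hpw hcC (by omega)
        intro i hi hgt hcontra
        have hieq : i = C.length - 1 := by omega
        subst hieq
        rw [← hbdef] at hcontra
        exact hbK (hcontra ▸ hc)
      obtain ⟨K₁, K₂, hKeq, hs1, hs2⟩ := prefix_split K b a hb1 (by omega) hKle
      have hsum12 : K₁.sum + K₂.sum = w := by
        rw [← hK2, hKeq]; simp
      have hlen12 : K₁.length + K₂.length = opt C w := by
        rw [← hK3, hKeq]; simp
      have hsw : K₁.sum < w := by omega
      have hspos : 0 < K₁.sum := by omega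
      have hopt_s : opt C K₁.sum ≤ K₁.length :=
        opt_le (coins_rep (fun c hc => hK1 c
          (by rw [hKeq]; exact List.mem_append.mpr (Or.inl hc))))
      have hgs2 : grd C K₁.sum = opt C K₁.sum := hmin _ hspos hsw
      have hcm2 : coinMax C K₁.sum = b := by
        rw [hbdef]; exact cm_top hpw (by omega) h0 (by omega)
      have hstep2 : grd C K₁.sum = 1 + grd C (K₁.sum - b) := by
        rw [grd_step hspos (by omega), hcm2]
      have hg3 : grd C (K₁.sum - b) = opt C (K₁.sum - b) := by
        rcases Nat.eq_zero_or_pos (K₁.sum - b) with hz | hz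
        · rw [hz, grd_zero, opt_zero]
        · exact hmin _ hz (by omega)
      have hopt_step : opt C K₁.sum = 1 + opt C (K₁.sum - b) := by
        rw [← hgs2, hstep2, hg3]
      have hrep2 := reprCosts_add (opt_mem hone (K₁.sum - b))
        (coins_rep (K := K₂) (fun c hc => hK1 c
          (by rw [hKeq]; exact List.mem_append.mpr (Or.inr hc))))
      rw [show (K₁.sum - b) + K₂.sum = w - b by omega] at hrep2
      have := opt_le hrep2
      omega
  rw [hgs, hgmin]
  omega

end PartB

theorem stmt_4 (C : List ℕ) (hchain : List.Chain' (· < ·) C)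
    (hhead : C.getD 0 0 = 1) (hlen : 3 ≤ C.length)
    (hnot : ¬ Orderly C) :
    C.getD 2 0 < sInf {v : ℕ | 0 < v ∧ grd C v ≠ opt C v} ∧
    sInf {v : ℕ | 0 < v ∧ grd C v ≠ opt C v} <
      C.getD (C.length - 2) 0 + C.getD (C.length - 1) 0 := by
  have hpw : List.Pairwise (· < ·) C := List.isChain_iff_pairwise.mp hchain
  set S := {v : ℕ | 0 < v ∧ grd C v ≠ opt C v} with hS
  have hne : S.Nonempty := by
    unfold Orderly at hnot
    push_neg at hnot
    obtain ⟨v, hv1, hv2⟩ := hnot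
    exact ⟨v, hv1, hv2⟩
  have hw : sInf S ∈ S := Nat.sInf_mem hne
  obtain ⟨hwpos, hwne⟩ := hw
  have hmin : ∀ v, 0 < v → v < sInf S → grd C v = opt C v := by
    intro v h1 h2
    by_contra h
    exact Nat.notMem_of_lt_sInf h2 ⟨h1, h⟩
  constructor
  · by_contra h
    push_neg at h
    exact hwne (partA hpw hlen hhead _ hwpos h)
  · by_contra h
    push_neg at h
    exact hwne (partB hpw hlen hhead hwpos hmin h)
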